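/- Suppose k = k(n) satisfies k ≫ n^{1/3} and k ≪ n/log n. Let λ_3 = ( (k/n^{1/3}) log(k/n^{1/3}) )^{1/2} and m_3 = (n/2)(1 − λ_3 n^{−1/3}). Then a.a.s. for every m ≥ m_3, the size of every non-special component of Ĝ_k(n,m) is at most n log n / k. -/

import Mathlib

open Filter SimpleGraph Asymptotics
open scoped Topology

noncomputable section

attribute [local instance] Classical.propDecidable

/-- The number of vertex pairs among `n` vertices. -/
def numPairs (n : ℕ) : ℕ := n.choose 2

/-- A sequence of `n.choose 2` unordered pairs of vertices. -/
abbrev EdgeSeq (n : ℕ) := Fin (numPairs n) → Sym2 (Fin n)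

/-- Orderings of all non-diagonal vertex pairs. -/
def edgeOrderings (n : ℕ) : Finset (EdgeSeq n) :=
  Finset.univ.filter fun f => Function.Injective f ∧ ∀ i, ¬ (f i).IsDiag

/-- The sample space: a uniformly random ordering of all pairs together with a uniformly
random set of `k` special vertices. -/
def sample (n k : ℕ) : Finset (EdgeSeq n × Finset (Fin n)) :=
  (edgeOrderings n) ×ˢ (Finset.univ.powersetCard k)

/-- Probability of the event `A` over a random ordering and a random special set. -/
def Pr (n k : ℕ) (A : EdgeSeq n → Finset (Fin n) → Prop) : ℝ :=
  (((sample n k).filter fun p => A p.1 p.2).card : ℝ) / ((sample n k).card : ℝ)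

/-- Probability of the event `A` over a random ordering only. -/
def PrOrd (n : ℕ) (A : EdgeSeq n → Prop) : ℝ :=
  (((edgeOrderings n).filter A).card : ℝ) / ((edgeOrderings n).card : ℝ)

/-- `A` holds asymptotically almost surely. -/
def AAS (k : ℕ → ℕ) (A : (n : ℕ) → EdgeSeq n → Finset (Fin n) → Prop) : Prop :=
  Tendsto (fun n => Pr n (k n) (A n)) atTop (nhds 1)

variable {V : Type*}

/-- Add the pair `e` as an edge. -/
def addEdge (G : SimpleGraph V) (e : Sym2 V) : SimpleGraph V :=
  SimpleGraph.fromEdgeSet (insert e G.edgeSet)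

/-- Adding `e` to `G` would join two components, each containing a special vertex. -/
def collides (S : Finset V) (G : SimpleGraph V) (e : Sym2 V) : Prop :=
  ∃ u v : V, e = s(u, v) ∧ ¬ G.Reachable u v ∧
    (∃ a ∈ S, G.Reachable u a) ∧ (∃ b ∈ S, G.Reachable v b)

/-- One step of the constrained process. -/
def hatStep (S : Finset V) (G : SimpleGraph V) (e : Sym2 V) : SimpleGraph V :=
  if collides S G e then G else addEdge G e

/-- The constrained graph built greedily from a list of pairs: each pair is added in turn
unless it would put two special vertices in the same component. -/
def hatList (S : Finset V) (l : List (Sym2 V)) : SimpleGraph V :=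
  l.foldl (hatStep S) ⊥

/-- The graph `Ĝ_k(n,m)` of the constrained process. -/
def hatG {n : ℕ} (S : Finset (Fin n)) (f : EdgeSeq n) (m : ℕ) : SimpleGraph (Fin n) :=
  hatList S ((List.ofFn f).take m)

/-- The graph `G(n,m)` of the Erdős–Rényi process. -/
def gnm {n : ℕ} (f : EdgeSeq n) (m : ℕ) : SimpleGraph (Fin n) :=
  SimpleGraph.fromEdgeSet {e | ∃ i : Fin (numPairs n), (i : ℕ) < m ∧ f i = e}

/-- The number of vertices of the connected component `C`. -/
def compSize [Fintype V] (G : SimpleGraph V) (C : G.ConnectedComponent) : ℕ :=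
  (Finset.univ.filter fun v => G.connectedComponentMk v = C).card

/-- The components of `G`, as a `Finset`. -/
def components [Fintype V] (G : SimpleGraph V) : Finset G.ConnectedComponent :=
  Finset.univ.image G.connectedComponentMk

/-- The number of connected components of `G`. -/
def numComponents [Fintype V] (G : SimpleGraph V) : ℕ := (components G).card

/-- The sizes of the components of `G`, sorted increasingly. -/
def compSizes [Fintype V] (G : SimpleGraph V) : List ℕ :=
  ((components G).val.map (compSize G)).sort (· ≤ ·)

/-- `L G i` is the size of the `i`-th largest component of `G` (`i = 1, 2, …`). -/
def L [Fintype V] (G : SimpleGraph V) (i : ℕ) : ℕ :=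
  (compSizes G).reverse.getD (i - 1) 0

/-- A component is special if it contains a special vertex. -/
def specialComp (S : Finset V) (G : SimpleGraph V) (C : G.ConnectedComponent) : Prop :=
  ∃ v ∈ S, G.connectedComponentMk v = C

/-- The sizes of the special components of `G`, sorted increasingly. -/
def specialCompSizes [Fintype V] (S : Finset V) (G : SimpleGraph V) : List ℕ :=
  (((components G).filter (specialComp S G)).val.map (compSize G)).sort (· ≤ ·)

/-- `Lhat S G i` is the size of the `i`-th largest special component of `G`. -/
def Lhat [Fintype V] (S : Finset V) (G : SimpleGraph V) (i : ℕ) : ℕ :=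
  (specialCompSizes S G).reverse.getD (i - 1) 0

/-- The number of edges of `G`. -/
def numEdges [Fintype V] (G : SimpleGraph V) : ℕ :=
  (Finset.univ.filter fun e : Sym2 V => e ∈ G.edgeSet).card

/-- `M(n,k)`: the number of edges at the end of the constrained process. -/
def Mfinal {n : ℕ} (S : Finset (Fin n)) (f : EdgeSeq n) : ℕ :=
  numEdges (hatG S f (numPairs n))

/-- `M̂(n,k)`: the first time at which the constrained process has exactly `k` components. -/
def Mhat {n : ℕ} (k : ℕ) (S : Finset (Fin n)) (f : EdgeSeq n) : ℕ :=
  sInf {m : ℕ | numComponents (hatG S f m) = k}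

end

noncomputable section
attribute [local instance] Classical.propDecidable

/-- `λ₃ = ((k/n^{1/3}) log(k/n^{1/3}))^{1/2}`. -/
def lam3 (k : ℕ → ℕ) (n : ℕ) : ℝ :=
  Real.sqrt (((k n : ℝ) / (n : ℝ) ^ ((1 : ℝ) / 3)) *
    Real.log ((k n : ℝ) / (n : ℝ) ^ ((1 : ℝ) / 3)))

/-- `m₃ = (n/2)(1 − λ₃ n^{−1/3})`. -/
def m3 (k : ℕ → ℕ) (n : ℕ) : ℕ :=
  ⌊((n : ℝ) / 2) * (1 - lam3 k n * (n : ℝ) ^ (-(1 : ℝ) / 3))⌋₊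

end

namespace NSsmall

noncomputable section
attribute [local instance] Classical.propDecidable

variable {V : Type*}

lemma le_addEdge (G : SimpleGraph V) (e : Sym2 V) : G ≤ addEdge G e := by
  conv_lhs => rw [← SimpleGraph.fromEdgeSet_edgeSet G]
  exact SimpleGraph.fromEdgeSet_mono (Set.subset_insert _ _)

lemma le_hatStep (S : Finset V) (G : SimpleGraph V) (e : Sym2 V) : G ≤ hatStep S G e := by
  unfold hatStep; split
  · exact le_refl _
  · exact le_addEdge G e

lemma le_foldl_hatStep (S : Finset V) : ∀ (l : List (Sym2 V)) (G : SimpleGraph V),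
    G ≤ l.foldl (hatStep S) G := by
  intro l
  induction l with
  | nil => intro G; exact le_refl _
  | cons a l ih => intro G; exact le_trans (le_hatStep S G a) (ih _)

lemma hatG_mono {n : ℕ} (S : Finset (Fin n)) (f : EdgeSeq n) {m m' : ℕ} (h : m ≤ m') :
    hatG S f m ≤ hatG S f m' := by
  unfold hatG hatList
  have h1 : (List.ofFn f).take m' = (List.ofFn f).take m ++ ((List.ofFn f).take m').drop m := by
    conv_lhs => rw [← List.take_append_drop m ((List.ofFn f).take m')]
    rw [List.take_take, min_eq_left h]
  rw [h1, List.foldl_append]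
  exact le_foldl_hatStep _ _ _

lemma hatG_succ {n : ℕ} (S : Finset (Fin n)) (f : EdgeSeq n) (i : Fin (numPairs n)) :
    hatG S f ((i : ℕ) + 1) = hatStep S (hatG S f (i : ℕ)) (f i) := by
  unfold hatG hatList
  rw [List.take_succ, List.getElem?_ofFn, dif_pos i.isLt, List.foldl_append]
  simp

lemma edgeSet_foldl_subset (S : Finset V) : ∀ (l : List (Sym2 V)) (G : SimpleGraph V),
    (l.foldl (hatStep S) G).edgeSet ⊆ G.edgeSet ∪ {e | e ∈ l} := by
  intro l
  induction l with
  | nil => intro G; simp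
  | cons a l ih =>
    intro G
    refine (ih (hatStep S G a)).trans ?_
    intro e he
    rcases he with he | he
    · unfold hatStep at he
      split at he
      · exact Or.inl he
      · rw [addEdge, SimpleGraph.edgeSet_fromEdgeSet] at he
        rcases he.1 with rfl | h
        · exact Or.inr (by simp)
        · exact Or.inl h
    · exact Or.inr (by simp only [Set.mem_setOf_eq] at he ⊢; exact List.mem_cons_of_mem _ he)

lemma hatG_le_gnm {n : ℕ} (S : Finset (Fin n)) (f : EdgeSeq n) (m : ℕ) :
    hatG S f m ≤ gnm f m := by
  intro u v huv
  have he : s(u,v) ∈ (hatG S f m).edgeSet := huv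
  have h2 := edgeSet_foldl_subset S ((List.ofFn f).take m) ⊥ he
  rw [gnm, SimpleGraph.fromEdgeSet_adj]
  refine ⟨?_, huv.ne⟩
  rcases h2 with h | h
  · simp at h
  · simp only [Set.mem_setOf_eq] at h
    obtain ⟨j, hj, hget⟩ := List.getElem_of_mem h
    have hjm : j < m := lt_of_lt_of_le hj (by
      rw [List.length_take, List.length_ofFn]; exact min_le_left _ _)
    have hjN : j < numPairs n := lt_of_lt_of_le hj (by
      rw [List.length_take, List.length_ofFn]; exact min_le_right _ _)
    refine ⟨⟨j, hjN⟩, hjm, ?_⟩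
    rw [← hget, List.getElem_take, List.getElem_ofFn]

lemma gnm_mono {n : ℕ} (f : EdgeSeq n) {m m' : ℕ} (h : m ≤ m') : gnm f m ≤ gnm f m' := by
  apply SimpleGraph.fromEdgeSet_mono
  rintro e ⟨i, him, hfi⟩
  exact ⟨i, lt_of_lt_of_le him h, hfi⟩

lemma reach_hat_of_gnm {n : ℕ} (S : Finset (Fin n)) (f : EdgeSeq n) (m : ℕ) (v : Fin n)
    (Hns : ¬ ∃ a ∈ S, (hatG S f m).Reachable v a) :
    ∀ u w : Fin n, (hatG S f m).Reachable v u → (gnm f m).Walk u w →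
      (hatG S f m).Reachable v w := by
  intro u w hvu p
  induction p with
  | nil => exact hvu
  | @cons u x w h p ih =>
    apply ih
    have hadj : (∃ i : Fin (numPairs n), (i : ℕ) < m ∧ f i = s(u,x)) ∧ u ≠ x := by
      rw [gnm, SimpleGraph.fromEdgeSet_adj] at h; exact h
    obtain ⟨⟨i, him, hfi⟩, hne⟩ := hadj
    by_cases hc : collides S (hatG S f (i : ℕ)) (f i)
    · exfalso
      obtain ⟨u', v', he, _, hsu, hsv⟩ := hc
      rw [hfi] at he
      have hmono := hatG_mono S f (le_of_lt him)
      have hx : ∃ a ∈ S, (hatG S f m).Reachable u a := by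
        rcases Sym2.eq_iff.mp he with ⟨h1, h2⟩ | ⟨h1, h2⟩
        · obtain ⟨a, ha, hr⟩ := hsu
          exact ⟨a, ha, (h1 ▸ hr).mono hmono⟩
        · obtain ⟨a, ha, hr⟩ := hsv
          exact ⟨a, ha, (h1 ▸ hr).mono hmono⟩
      obtain ⟨a, ha, hr⟩ := hx
      exact Hns ⟨a, ha, hvu.trans hr⟩
    · have hstep : hatG S f ((i : ℕ) + 1) = addEdge (hatG S f (i : ℕ)) (f i) := by
        rw [hatG_succ, hatStep, if_neg hc]
      have hadj2 : (hatG S f ((i : ℕ) + 1)).Adj u x := by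
        rw [hstep, addEdge, SimpleGraph.fromEdgeSet_adj]
        exact ⟨by rw [hfi]; exact Set.mem_insert _ _, hne⟩
      have hadj3 : (hatG S f m).Adj u x := hatG_mono S f (by omega) hadj2
      exact hvu.trans hadj3.reachable

lemma reach_iff {n : ℕ} (S : Finset (Fin n)) (f : EdgeSeq n) (m : ℕ) (v : Fin n)
    (Hns : ¬ ∃ a ∈ S, (hatG S f m).Reachable v a) (u : Fin n) :
    (gnm f m).Reachable v u ↔ (hatG S f m).Reachable v u := by
  constructor
  · intro h
    obtain ⟨p⟩ := h
    exact reach_hat_of_gnm S f m v Hns v u (SimpleGraph.Reachable.refl v) p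
  · intro h
    exact h.mono (hatG_le_gnm S f m)

/-- The vertex set of the `gnm`-component of `u` at time `m`. -/
def rcomp {n : ℕ} (f : EdgeSeq n) (m : ℕ) (u : Fin n) : Finset (Fin n) :=
  Finset.univ.filter fun w => (gnm f m).Reachable u w

lemma rcomp_mono {n : ℕ} (f : EdgeSeq n) {m m' : ℕ} (h : m ≤ m') (u : Fin n) :
    rcomp f m u ⊆ rcomp f m' u := by
  intro w hw
  simp only [rcomp, Finset.mem_filter, Finset.mem_univ, true_and] at hw ⊢
  exact hw.mono (gnm_mono f h)

lemma rcomp_eq_of_mem {n : ℕ} (f : EdgeSeq n) (m : ℕ) {u v : Fin n}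
    (h : (gnm f m).Reachable v u) : rcomp f m u = rcomp f m v := by
  ext w
  simp only [rcomp, Finset.mem_filter, Finset.mem_univ, true_and]
  exact ⟨fun hw => h.trans hw, fun hw => h.symm.trans hw⟩

lemma compSize_eq_rcomp {n : ℕ} (S : Finset (Fin n)) (f : EdgeSeq n) (m : ℕ) (v : Fin n)
    (Hns : ¬ ∃ a ∈ S, (hatG S f m).Reachable v a) :
    compSize (hatG S f m) ((hatG S f m).connectedComponentMk v) = (rcomp f m v).card := by
  unfold compSize rcomp
  congr 1
  ext u
  simp only [Finset.mem_filter, Finset.mem_univ, true_and]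
  rw [SimpleGraph.ConnectedComponent.eq, reach_iff S f m v Hns u]
  exact ⟨fun h => h.symm, fun h => h.symm⟩

def Mset {n : ℕ} (t : ℕ) (f : EdgeSeq n) (u : Fin n) : Set ℕ := {m | t ≤ (rcomp f m u).card}

def Dset {n : ℕ} (t : ℕ) (f : EdgeSeq n) (u : Fin n) : Finset (Fin n) :=
  rcomp f (sInf (Mset t f u)) u

def Rprop {n : ℕ} (t : ℕ) (f : EdgeSeq n) (S : Finset (Fin n)) (u : Fin n) : Prop :=
  (Mset t f u).Nonempty ∧ ∀ a ∈ S, a ∉ Dset t f u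

/-- The event of the theorem, with explicit parameters. -/
def Ev (n kk mlb : ℕ) (f : EdgeSeq n) (S : Finset (Fin n)) : Prop :=
  ∀ m : ℕ, mlb ≤ m → ∀ v : Fin n,
    (¬ ∃ a ∈ S, (hatG S f m).Reachable v a) →
    (compSize (hatG S f m) ((hatG S f m).connectedComponentMk v) : ℝ) ≤
      (n : ℝ) * Real.log n / (kk : ℝ)

lemma bad_many_R {n : ℕ} (t mlb kk : ℕ)
    (hs0 : (0:ℝ) ≤ (n:ℝ) * Real.log n / (kk:ℝ))
    (ht : t = ⌊(n:ℝ) * Real.log n / (kk:ℝ)⌋₊ + 1)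
    (f : EdgeSeq n) (S : Finset (Fin n)) (hbad : ¬ Ev n kk mlb f S) :
    t ≤ (Finset.univ.filter fun u => Rprop t f S u).card := by
  unfold Ev at hbad
  push_neg at hbad
  obtain ⟨m, hm, v, Hns0, hlt⟩ := hbad
  have Hns : ¬ ∃ a ∈ S, (hatG S f m).Reachable v a := by push_neg; exact Hns0
  rw [compSize_eq_rcomp S f m v Hns] at hlt
  have htcard : t ≤ (rcomp f m v).card := by
    rw [ht]
    exact Nat.succ_le_of_lt ((Nat.floor_lt hs0).mpr hlt)
  have hdisj : ∀ a ∈ S, a ∉ rcomp f m v := by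
    intro a ha hmem
    simp only [rcomp, Finset.mem_filter, Finset.mem_univ, true_and] at hmem
    exact Hns ⟨a, ha, (reach_iff S f m v Hns a).mp hmem⟩
  refine le_trans htcard (Finset.card_le_card ?_)
  intro u hu
  have hvu : (gnm f m).Reachable v u := by
    simpa [rcomp] using hu
  have hcomp : rcomp f m u = rcomp f m v := rcomp_eq_of_mem f m hvu
  have hMm : m ∈ Mset t f u := by
    simp only [Mset, Set.mem_setOf_eq, hcomp]; exact htcard
  have hne : (Mset t f u).Nonempty := ⟨m, hMm⟩
  have hsub : Dset t f u ⊆ rcomp f m v := by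
    rw [Dset, ← hcomp]
    exact rcomp_mono f (Nat.sInf_le hMm) u
  simp only [Finset.mem_filter, Finset.mem_univ, true_and]
  exact ⟨hne, fun a ha hmem => hdisj a ha (hsub hmem)⟩

lemma count_S_le {n : ℕ} (t kk : ℕ) (f : EdgeSeq n) (u : Fin n) :
    (((Finset.univ : Finset (Fin n)).powersetCard kk).filter
      fun S => Rprop t f S u).card ≤ (n - t).choose kk := by
  by_cases h : (Mset t f u).Nonempty
  · have hD : t ≤ (Dset t f u).card := Nat.sInf_mem h
    have hsub : ((Finset.univ : Finset (Fin n)).powersetCard kk).filter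
        (fun S => Rprop t f S u) ⊆ (Finset.univ \ Dset t f u).powersetCard kk := by
      intro S hS
      simp only [Finset.mem_filter, Finset.mem_powersetCard] at hS ⊢
      obtain ⟨⟨_, hcard⟩, _, hR⟩ := hS
      exact ⟨fun a haS => Finset.mem_sdiff.mpr ⟨Finset.mem_univ a, hR a haS⟩, hcard⟩
    refine le_trans (Finset.card_le_card hsub) ?_
    rw [Finset.card_powersetCard, Finset.card_sdiff_of_subset (Finset.subset_univ _),
      Finset.card_univ, Fintype.card_fin]
    exact Nat.choose_le_choose kk (Nat.sub_le_sub_left hD n)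
  · rw [Finset.filter_false_of_mem, Finset.card_empty]
    · exact Nat.zero_le _
    · intro S _ hR; exact h hR.1

lemma count_bad {n : ℕ} (t mlb kk : ℕ)
    (hs0 : (0:ℝ) ≤ (n:ℝ) * Real.log n / (kk:ℝ))
    (ht : t = ⌊(n:ℝ) * Real.log n / (kk:ℝ)⌋₊ + 1) :
    t * ((sample n kk).filter fun p => ¬ Ev n kk mlb p.1 p.2).card ≤
      (edgeOrderings n).card * (n * (n - t).choose kk) := by
  set Bad := (sample n kk).filter fun p => ¬ Ev n kk mlb p.1 p.2 with hBad
  have h1 : t * Bad.card ≤ ∑ p ∈ Bad, (Finset.univ.filter fun u => Rprop t p.1 p.2 u).card := by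
    rw [mul_comm]
    have := Finset.card_nsmul_le_sum Bad
      (fun p => (Finset.univ.filter fun u => Rprop t p.1 p.2 u).card) t
      (fun p hp => bad_many_R t mlb kk hs0 ht p.1 p.2 (Finset.mem_filter.mp hp).2)
    simpa using this
  refine le_trans h1 ?_
  have h2 : ∑ p ∈ Bad, (Finset.univ.filter fun u => Rprop t p.1 p.2 u).card ≤
      ∑ p ∈ sample n kk, (Finset.univ.filter fun u => Rprop t p.1 p.2 u).card :=
    Finset.sum_le_sum_of_subset (Finset.filter_subset _ _)
  refine le_trans h2 ?_
  rw [sample, Finset.sum_product]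
  have h3 : ∀ f ∈ edgeOrderings n,
      (∑ S ∈ (Finset.univ : Finset (Fin n)).powersetCard kk,
        (Finset.univ.filter fun u => Rprop t f S u).card) ≤ n * (n - t).choose kk := by
    intro f _
    have : ∀ S, (Finset.univ.filter fun u => Rprop t f S u).card =
        ∑ u : Fin n, if Rprop t f S u then 1 else 0 := by
      intro S; rw [Finset.card_filter]
    simp_rw [this]
    rw [Finset.sum_comm]
    have h4 : ∀ u : Fin n,
        (∑ S ∈ (Finset.univ : Finset (Fin n)).powersetCard kk,
          if Rprop t f S u then 1 else 0) ≤ (n - t).choose kk := by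
      intro u
      rw [← Finset.card_filter]
      exact count_S_le t kk f u
    calc (∑ u : Fin n, ∑ S ∈ (Finset.univ : Finset (Fin n)).powersetCard kk,
            if Rprop t f S u then 1 else 0)
        ≤ ∑ _u : Fin n, (n - t).choose kk := Finset.sum_le_sum (fun u _ => h4 u)
      _ = n * (n - t).choose kk := by
          rw [Finset.sum_const, Finset.card_univ, Fintype.card_fin, smul_eq_mul]
  calc (∑ f ∈ edgeOrderings n, ∑ S ∈ (Finset.univ : Finset (Fin n)).powersetCard kk,
          (Finset.univ.filter fun u => Rprop t f S u).card)
      ≤ ∑ _f ∈ edgeOrderings n, n * (n - t).choose kk := Finset.sum_le_sum h3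
    _ = (edgeOrderings n).card * (n * (n - t).choose kk) := by
        rw [Finset.sum_const, smul_eq_mul]

lemma choose_ratio (n t : ℕ) (htn : t ≤ n) (hn : 0 < n) :
    ∀ kk : ℕ, kk ≤ n →
      ((n - t).choose kk : ℝ) ≤ (n.choose kk : ℝ) * (((n:ℝ) - t) / n) ^ kk := by
  have hq0 : (0:ℝ) ≤ ((n:ℝ) - t) / n := by
    apply div_nonneg _ (Nat.cast_nonneg n)
    have : (t:ℝ) ≤ n := Nat.cast_le.mpr htn
    linarith
  intro kk
  induction kk with
  | zero => intro _; simp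
  | succ k ih =>
    intro hk
    have ihk := ih (Nat.le_of_succ_le hk)
    set q : ℝ := ((n:ℝ) - t) / n with hq
    have hk1 : (0:ℝ) < (k:ℝ) + 1 := by positivity
    rw [← mul_le_mul_iff_left₀ hk1]
    have h1 : ((n-t).choose (k+1) : ℝ) * ((k:ℝ)+1) = ((n-t).choose k : ℝ) * ((n - t - k : ℕ) : ℝ) := by
      exact_mod_cast Nat.choose_succ_right_eq (n-t) k
    have h2 : (n.choose (k+1) : ℝ) * ((k:ℝ)+1) = (n.choose k : ℝ) * ((n - k : ℕ) : ℝ) := by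
      exact_mod_cast Nat.choose_succ_right_eq n k
    rw [h1]
    have hkey : ((n - t - k : ℕ) : ℝ) ≤ ((n - k : ℕ) : ℝ) * q := by
      by_cases hcase : n - t ≤ k
      · rw [Nat.sub_eq_zero_of_le hcase]
        have : (0:ℝ) ≤ ((n - k : ℕ) : ℝ) := Nat.cast_nonneg _
        simpa using mul_nonneg this hq0
      · push_neg at hcase
        have hkn : k ≤ n := Nat.le_of_succ_le hk
        have hknt : k ≤ n - t := le_of_lt hcase
        have e1 : ((n - t - k : ℕ) : ℝ) = (n:ℝ) - t - k := by
          rw [Nat.cast_sub hknt, Nat.cast_sub htn]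
        have e2 : ((n - k : ℕ) : ℝ) = (n:ℝ) - k := by rw [Nat.cast_sub hkn]
        rw [e1, e2, hq]
        have hnpos : (0:ℝ) < n := by exact_mod_cast hn
        rw [← mul_div_assoc, le_div_iff₀ hnpos]
        nlinarith [mul_nonneg (Nat.cast_nonneg (α := ℝ) t) (Nat.cast_nonneg (α := ℝ) k)]
    have hnn1 : (0:ℝ) ≤ ((n - t - k : ℕ) : ℝ) := Nat.cast_nonneg _
    have hnn2 : (0:ℝ) ≤ (n.choose k : ℝ) * q ^ k := by positivity
    calc ((n-t).choose k : ℝ) * ((n - t - k : ℕ) : ℝ)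
        ≤ ((n.choose k : ℝ) * q ^ k) * (((n - k : ℕ) : ℝ) * q) :=
          mul_le_mul ihk hkey hnn1 hnn2
      _ = ((n.choose k : ℝ) * ((n - k : ℕ) : ℝ)) * q ^ (k+1) := by ring
      _ = ((n.choose (k+1) : ℝ) * ((k:ℝ)+1)) * q ^ (k+1) := by rw [h2]
      _ = (n.choose (k+1) : ℝ) * q ^ (k+1) * ((k:ℝ)+1) := by ring

lemma edgeOrderings_card_pos (n : ℕ) : 0 < (edgeOrderings n).card := by
  rw [Finset.card_pos]
  have hcard : Fintype.card {a : Sym2 (Fin n) // ¬ a.IsDiag} = Fintype.card (Fin (numPairs n)) := by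
    rw [Sym2.card_subtype_not_diag, Fintype.card_fin, Fintype.card_fin]
    rfl
  obtain ⟨e⟩ := Fintype.card_eq.mp hcard.symm
  refine ⟨fun i => (e i).1, ?_⟩
  rw [edgeOrderings, Finset.mem_filter]
  exact ⟨Finset.mem_univ _, fun i j h => e.injective (Subtype.ext h), fun i => (e i).2⟩

lemma Pr_le_one (n kk : ℕ) (A : EdgeSeq n → Finset (Fin n) → Prop) : Pr n kk A ≤ 1 := by
  rw [Pr]
  rcases eq_or_ne ((sample n kk).card : ℝ) 0 with h | h
  · rw [h, div_zero]; norm_num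
  · rw [div_le_one (lt_of_le_of_ne (Nat.cast_nonneg _) (Ne.symm h))]
    exact_mod_cast Finset.card_le_card (Finset.filter_subset _ _)

set_option maxHeartbeats 1000000 in
lemma key_bound (n kk mlb : ℕ) (hn : 3 ≤ n) (hk1 : 1 ≤ kk) (hkn : kk ≤ n)
    (hsn : (n:ℝ) * Real.log n / (kk:ℝ) < (n:ℝ)) :
    1 - (kk:ℝ) / ((n:ℝ) * Real.log n) ≤ Pr n kk (Ev n kk mlb) := by
  have hn0 : (0:ℝ) < n := by
    have : (0:ℕ) < n := by omega
    exact_mod_cast this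
  have hn1 : (1:ℝ) < n := by
    have : (1:ℕ) < n := by omega
    exact_mod_cast this
  have hlog : 0 < Real.log n := Real.log_pos hn1
  have hkpos : (0:ℝ) < kk := by exact_mod_cast hk1
  set s : ℝ := (n:ℝ) * Real.log n / (kk:ℝ) with hs
  have hs0 : 0 < s := by positivity
  set t : ℕ := ⌊s⌋₊ + 1 with htdef
  have htpos : (0:ℕ) < t := Nat.succ_pos _
  have htposR : (0:ℝ) < t := by exact_mod_cast htpos
  have hts : s < t := by
    have := Nat.lt_floor_add_one s
    rw [htdef]
    push_cast
    exact this
  have htn : t ≤ n := Nat.succ_le_of_lt ((Nat.floor_lt hs0.le).mpr hsn)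
  have hOpos : (0:ℕ) < (edgeOrderings n).card := edgeOrderings_card_pos n
  have hCpos : (0:ℕ) < n.choose kk := Nat.choose_pos hkn
  set O : ℕ := (edgeOrderings n).card with hO
  set C : ℕ := n.choose kk with hC
  have hsamp : (sample n kk).card = O * C := by
    rw [sample, Finset.card_product, Finset.card_powersetCard, Finset.card_univ,
      Fintype.card_fin]
  have hsamppos : (0:ℝ) < ((sample n kk).card : ℝ) := by
    rw [hsamp]
    have : 0 < O * C := Nat.mul_pos hOpos hCpos
    exact_mod_cast this
  set B : ℕ := ((sample n kk).filter fun p => ¬ Ev n kk mlb p.1 p.2).card with hB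
  have hsplit : (((sample n kk).filter fun p => Ev n kk mlb p.1 p.2).card : ℝ) =
      ((sample n kk).card : ℝ) - B := by
    have := Finset.card_filter_add_card_filter_not
      (s := sample n kk) (p := fun p => Ev n kk mlb p.1 p.2)
    rw [hB]
    push_cast [← this]
    ring
  -- the counting bound
  have hcount : (t:ℝ) * B ≤ (O:ℝ) * ((n:ℝ) * ((n - t).choose kk : ℝ)) := by
    have := count_bad (n := n) t mlb kk hs0.le htdef
    exact_mod_cast this
  -- the choose-ratio bound
  set q : ℝ := ((n:ℝ) - t) / n with hq
  have hq0 : 0 ≤ q := by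
    have : (t:ℝ) ≤ n := by exact_mod_cast htn
    apply div_nonneg _ hn0.le
    linarith
  have hratio : ((n - t).choose kk : ℝ) ≤ (C:ℝ) * q ^ kk :=
    choose_ratio n t htn (by omega) kk hkn
  -- q^kk ≤ 1/n
  have hqexp : q ≤ Real.exp (-((t:ℝ)/n)) := by
    have h1 := Real.add_one_le_exp (-((t:ℝ)/n))
    have h2 : q = 1 - (t:ℝ)/n := by
      rw [hq]; field_simp
    rw [h2]
    linarith
  have hpow : q ^ kk ≤ Real.exp (-((t:ℝ)/n)) ^ kk := pow_le_pow_left₀ hq0 hqexp kk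
  have hexp1 : Real.exp (-((t:ℝ)/n)) ^ kk = Real.exp ((kk:ℝ) * (-((t:ℝ)/n))) := by
    rw [← Real.exp_nat_mul]
  have hexp2 : Real.exp ((kk:ℝ) * (-((t:ℝ)/n))) ≤ Real.exp (-Real.log n) := by
    apply Real.exp_le_exp.mpr
    have hst : (kk:ℝ) * s ≤ (kk:ℝ) * t := by
      apply mul_le_mul_of_nonneg_left hts.le hkpos.le
    have hkks : (kk:ℝ) * s = (n:ℝ) * Real.log n := by
      rw [hs]; field_simp
    have h3 : (kk:ℝ) * (-((t:ℝ)/(n:ℝ))) = -((kk:ℝ)*(t:ℝ)/(n:ℝ)) := by ring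
    rw [h3, neg_le_neg_iff, le_div_iff₀ hn0]
    nlinarith
  have hexp3 : Real.exp (-Real.log n) = 1 / n := by
    rw [Real.exp_neg, Real.exp_log hn0, one_div]
  have hqn : q ^ kk ≤ 1 / n := by
    calc q ^ kk ≤ Real.exp (-((t:ℝ)/n)) ^ kk := hpow
      _ = Real.exp ((kk:ℝ) * (-((t:ℝ)/n))) := hexp1
      _ ≤ Real.exp (-Real.log n) := hexp2
      _ = 1 / n := hexp3
  -- n * Cnt ≤ C
  have hnC : (n:ℝ) * ((n - t).choose kk : ℝ) ≤ (C:ℝ) := by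
    calc (n:ℝ) * ((n - t).choose kk : ℝ) ≤ (n:ℝ) * ((C:ℝ) * q ^ kk) := by
          apply mul_le_mul_of_nonneg_left hratio hn0.le
      _ ≤ (n:ℝ) * ((C:ℝ) * (1/n)) := by
          apply mul_le_mul_of_nonneg_left _ hn0.le
          apply mul_le_mul_of_nonneg_left hqn (Nat.cast_nonneg _)
      _ = (C:ℝ) := by field_simp
  have hOC : (0:ℝ) < (O:ℝ) * (C:ℝ) := by
    have : (0:ℕ) < O * C := Nat.mul_pos hOpos hCpos
    push_cast at this ⊢
    exact_mod_cast this
  have htB : (t:ℝ) * B ≤ (O:ℝ) * C := by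
    calc (t:ℝ) * B ≤ (O:ℝ) * ((n:ℝ) * ((n - t).choose kk : ℝ)) := hcount
      _ ≤ (O:ℝ) * C := mul_le_mul_of_nonneg_left hnC (Nat.cast_nonneg _)
  -- B/(O*C) ≤ kk/(n log n)
  have hmain : (B:ℝ) / ((O:ℝ) * C) ≤ (kk:ℝ) / ((n:ℝ) * Real.log n) := by
    have h1 : (B:ℝ) / ((O:ℝ) * C) ≤ 1 / t := by
      rw [div_le_div_iff₀ hOC htposR]
      linarith
    have h2 : 1 / (t:ℝ) ≤ (kk:ℝ) / ((n:ℝ) * Real.log n) := by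
      rw [div_le_div_iff₀ htposR (by positivity)]
      have hkks : (kk:ℝ) * s = (n:ℝ) * Real.log n := by
        rw [hs]; field_simp
      nlinarith
    linarith
  -- conclude
  rw [Pr, hsplit, hsamp]
  push_cast
  rw [sub_div]
  have hself : ((O:ℝ) * C) / ((O:ℝ) * C) = 1 := div_self (ne_of_gt hOC)
  rw [hself]
  have : ((B:ℝ)) / ((O:ℝ) * C) ≤ (kk:ℝ) / ((n:ℝ) * Real.log n) := hmain
  linarith

end
end NSsmall
/-- **Lemma (non-special components stay small).** If `n^{1/3} ≪ k ≪ n/log n`, then a.a.s.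
for every `m ≥ m₃` the size of every non-special component of `Ĝ_k(n,m)` is at most
`n log n / k`. -/
theorem nonspecial_components_small (k : ℕ → ℕ)
    (hklb : (fun n : ℕ => (n : ℝ) ^ ((1 : ℝ) / 3)) =o[atTop] fun n : ℕ => (k n : ℝ))
    (hkub : (fun n : ℕ => (k n : ℝ)) =o[atTop] fun n : ℕ => (n : ℝ) / Real.log n) :
    AAS k fun n f S =>
      ∀ m : ℕ, m3 k n ≤ m → ∀ v : Fin n,
        (¬ ∃ a ∈ S, (hatG S f m).Reachable v a) →
        (compSize (hatG S f m) ((hatG S f m).connectedComponentMk v) : ℝ) ≤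
          (n : ℝ) * Real.log n / (k n : ℝ) := by
  classical
  -- eventual lower bound on `k`
  have hlb0 := hklb.def one_pos
  have hub0 := hkub.def one_pos
  have hlogcube : ∀ᶠ x : ℝ in atTop, Real.log x ≤ (1/2) * x ^ ((1:ℝ)/3) := by
    have h := (isLittleO_log_rpow_atTop (by norm_num : (0:ℝ) < 1/3)).def
      (by norm_num : (0:ℝ) < 1/2)
    filter_upwards [h, eventually_ge_atTop (1:ℝ)] with x hx hx1
    have hlx : 0 ≤ Real.log x := Real.log_nonneg hx1
    have hrx : (0:ℝ) ≤ x ^ ((1:ℝ)/3) := Real.rpow_nonneg (by linarith) _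
    rw [Real.norm_eq_abs, Real.norm_eq_abs, abs_of_nonneg hlx, abs_of_nonneg hrx] at hx
    linarith
  have hlogcubeN : ∀ᶠ n : ℕ in atTop, Real.log n ≤ (1/2) * (n:ℝ) ^ ((1:ℝ)/3) :=
    tendsto_natCast_atTop_atTop.eventually hlogcube
  -- per-n facts on an eventual set
  have hfacts : ∀ᶠ n : ℕ in atTop,
      3 ≤ n ∧ 1 ≤ k n ∧ k n ≤ n ∧
      (n:ℝ) * Real.log n / (k n : ℝ) < (n:ℝ) ∧ 1 ≤ Real.log n := by
    filter_upwards [hlb0, hub0, hlogcubeN, eventually_ge_atTop 3] with n h1 h2 h3 hn3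
    have hn0 : (0:ℝ) < n := by
      have : (0:ℕ) < n := by omega
      exact_mod_cast this
    have hn3R : (3:ℝ) ≤ n := by exact_mod_cast hn3
    have hlog1 : 1 ≤ Real.log n := by
      rw [Real.le_log_iff_exp_le hn0]
      calc Real.exp 1 ≤ 2.7182818286 := Real.exp_one_lt_d9.le
        _ ≤ 3 := by norm_num
        _ ≤ n := hn3R
    have hlogpos : 0 < Real.log n := lt_of_lt_of_le one_pos hlog1
    -- lower bound: n^(1/3) ≤ k n
    have hcube_pos : (0:ℝ) < (n:ℝ) ^ ((1:ℝ)/3) := Real.rpow_pos_of_pos hn0 _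
    have hklow : (n:ℝ) ^ ((1:ℝ)/3) ≤ (k n : ℝ) := by
      rw [Real.norm_eq_abs, Real.norm_eq_abs, one_mul, abs_of_nonneg hcube_pos.le,
        abs_of_nonneg (Nat.cast_nonneg _)] at h1
      exact h1
    have hone_lt_cube : (1:ℝ) < (n:ℝ) ^ ((1:ℝ)/3) := by
      have h31 : (1:ℝ) < 3 ^ ((1:ℝ)/3) := by
        have hh : (1:ℝ) ^ ((1:ℝ)/3) < (3:ℝ) ^ ((1:ℝ)/3) :=
          Real.rpow_lt_rpow (by norm_num) (by norm_num) (by norm_num)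
        rwa [Real.one_rpow] at hh
      calc (1:ℝ) < 3 ^ ((1:ℝ)/3) := h31
        _ ≤ (n:ℝ) ^ ((1:ℝ)/3) := Real.rpow_le_rpow (by norm_num) hn3R (by norm_num)
    have hk1 : 1 ≤ k n := by
      have : (1:ℝ) < (k n : ℝ) := lt_of_lt_of_le hone_lt_cube hklow
      exact_mod_cast this.le
    have hkposR : (0:ℝ) < (k n : ℝ) := by
      have : (0:ℕ) < k n := hk1
      exact_mod_cast this
    -- upper bound: k n ≤ n
    have hnd_pos : (0:ℝ) < (n:ℝ) / Real.log n := by positivity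
    have hkup : (k n : ℝ) ≤ (n:ℝ) / Real.log n := by
      rw [Real.norm_eq_abs, Real.norm_eq_abs, one_mul, abs_of_nonneg (Nat.cast_nonneg _),
        abs_of_nonneg hnd_pos.le] at h2
      exact h2
    have hkn : k n ≤ n := by
      have h4 : (n:ℝ) / Real.log n ≤ (n:ℝ) := by
        apply div_le_self hn0.le hlog1
      have : (k n : ℝ) ≤ (n:ℝ) := le_trans hkup h4
      exact_mod_cast this
    -- s < n
    have hsn : (n:ℝ) * Real.log n / (k n : ℝ) < (n:ℝ) := by
      rw [div_lt_iff₀ hkposR]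
      have hlk : Real.log n < (k n : ℝ) := by
        calc Real.log n ≤ (1/2) * (n:ℝ) ^ ((1:ℝ)/3) := h3
          _ < (n:ℝ) ^ ((1:ℝ)/3) := by linarith
          _ ≤ (k n : ℝ) := hklow
      calc (n:ℝ) * Real.log n < (n:ℝ) * (k n : ℝ) := by
            exact mul_lt_mul_of_pos_left hlk hn0
        _ = (n:ℝ) * (k n : ℝ) := rfl
    exact ⟨hn3, hk1, hkn, hsn, hlog1⟩
  -- the lower bound sequence tends to 1
  have h0 : Tendsto (fun n : ℕ => (k n : ℝ) / ((n:ℝ) * Real.log n)) atTop (nhds 0) := by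
    have ht := hkub.tendsto_div_nhds_zero
    apply tendsto_of_tendsto_of_tendsto_of_le_of_le' tendsto_const_nhds ht
    · filter_upwards [hfacts] with n hf
      have hn0 : (0:ℝ) < n := by
        have : (0:ℕ) < n := by omega
        exact_mod_cast this
      positivity
    · filter_upwards [hfacts] with n hf
      obtain ⟨hn3, hk1, hkn, hsn, hlog1⟩ := hf
      have hn0 : (0:ℝ) < n := by
        have : (0:ℕ) < n := by omega
        exact_mod_cast this
      have h1 : (0:ℝ) < (n:ℝ) / Real.log n := by positivity
      have h2 : (n:ℝ) / Real.log n ≤ (n:ℝ) * Real.log n := by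
        calc (n:ℝ) / Real.log n ≤ (n:ℝ) := div_le_self hn0.le hlog1
          _ ≤ (n:ℝ) * Real.log n := le_mul_of_one_le_right hn0.le hlog1
      exact div_le_div_of_nonneg_left (Nat.cast_nonneg _) h1 h2
  have hlow : Tendsto (fun n : ℕ => 1 - (k n : ℝ) / ((n:ℝ) * Real.log n)) atTop (nhds 1) := by
    have h1 : Tendsto (fun _ : ℕ => (1:ℝ)) atTop (nhds 1) := tendsto_const_nhds
    simpa using h1.sub h0
  unfold AAS
  apply tendsto_of_tendsto_of_tendsto_of_le_of_le' hlow tendsto_const_nhds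
  · filter_upwards [hfacts] with n hf
    obtain ⟨hn3, hk1, hkn, hsn, _⟩ := hf
    exact NSsmall.key_bound n (k n) (m3 k n) hn3 hk1 hkn hsn
  · exact Filter.Eventually.of_forall fun n => NSsmall.Pr_le_one n (k n) _
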